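/- Let a, b be real numbers with 0 < a < 1 and 0 < b < 1. Then lim_{c→0⁺} Γ(c)·(₃F₂(a, b, c; 1, 1; 1) − 1) = ab·₄F₃(1+a, 1+b, 1, 1; 2, 2, 2; 1). -/

import Mathlib

set_option autoImplicit false

open Filter
open scoped Topology

/-- Pochhammer symbol `(a)_n = a(a+1)⋯(a+n−1)` for a real number. -/
noncomputable def pochR (a : ℝ) (n : ℕ) : ℝ := ∏ k ∈ Finset.range n, (a + k)

lemma pochR_pos {s : ℝ} (hs : 0 < s) (n : ℕ) : 0 < pochR s n :=
  Finset.prod_pos fun k _ => by positivity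

lemma pochR_one (n : ℕ) : pochR 1 n = n.factorial := by
  induction n with
  | zero => simp [pochR]
  | succ n ih =>
      rw [pochR, Finset.prod_range_succ, ← pochR, ih]
      push_cast [Nat.factorial_succ]; ring

lemma pochR_two (n : ℕ) : pochR 2 n = (n + 1).factorial := by
  induction n with
  | zero => simp [pochR]
  | succ n ih =>
      rw [pochR, Finset.prod_range_succ, ← pochR, ih]
      push_cast [Nat.factorial_succ]; ring

lemma pochR_succ' (s : ℝ) (n : ℕ) : pochR s (n + 1) = s * pochR (s + 1) n := by
  rw [pochR, Finset.prod_range_succ']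
  simp only [Nat.cast_zero, add_zero, Nat.cast_add, Nat.cast_one]
  rw [pochR, mul_comm]
  congr 1
  exact Finset.prod_congr rfl fun k _ => by ring

lemma ratio_le {s : ℝ} (hs0 : 0 ≤ s) (hs1 : s ≤ 1) (K : ℝ) (hK : 0 ≤ K) :
    (K + s) / (K + 1) ≤ ((K + 1) / (K + 2)) ^ (1 - s) := by
  have hK1 : (0:ℝ) < K + 1 := by linarith
  have h1 : (K + s) / (K + 1) = 1 + -((1 - s) / (K + 1)) := by field_simp; ring
  have h2 : (1:ℝ) + -((1 - s) / (K + 1)) ≤ Real.exp (-((1 - s) / (K + 1))) := by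
    linarith [Real.add_one_le_exp (-((1 - s) / (K + 1)))]
  have h3 : Real.exp (-((1 - s) / (K + 1))) = Real.exp (-(1 / (K + 1))) ^ (1 - s) := by
    rw [show -((1 - s) / (K + 1)) = -(1 / (K + 1)) * (1 - s) by ring, Real.exp_mul]
  have h4 : Real.exp (-(1 / (K + 1))) ≤ (K + 1) / (K + 2) := by
    have he : (K + 2) / (K + 1) ≤ Real.exp (1 / (K + 1)) := by
      have := Real.add_one_le_exp (1 / (K + 1))
      have : 1 / (K + 1) + 1 = (K + 2) / (K + 1) := by field_simp; ring
      linarith [Real.add_one_le_exp (1 / (K + 1))]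
    rw [Real.exp_neg]
    rw [inv_le_comm₀ (Real.exp_pos _) (by positivity)]
    calc ((K + 1) / (K + 2))⁻¹ = (K + 2) / (K + 1) := by rw [inv_div]
    _ ≤ Real.exp (1 / (K + 1)) := he
  have h5 : Real.exp (-(1 / (K + 1))) ^ (1 - s) ≤ ((K + 1) / (K + 2)) ^ (1 - s) :=
    Real.rpow_le_rpow (Real.exp_pos _).le h4 (by linarith)
  rw [h1]
  calc (1:ℝ) + -((1 - s) / (K + 1)) ≤ Real.exp (-((1 - s) / (K + 1))) := h2
    _ = Real.exp (-(1 / (K + 1))) ^ (1 - s) := h3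
    _ ≤ ((K + 1) / (K + 2)) ^ (1 - s) := h5

lemma prod_ratio_le {s : ℝ} (hs0 : 0 ≤ s) (hs1 : s ≤ 1) (m : ℕ) :
    ∏ j ∈ Finset.range m, (((j : ℝ) + 1 + s) / ((j : ℝ) + 2)) ≤ (2 / ((m : ℝ) + 2)) ^ (1 - s) := by
  induction m with
  | zero => simp
  | succ m ih =>
      rw [Finset.prod_range_succ]
      have hstep : ((m : ℝ) + 1 + s) / ((m : ℝ) + 2) ≤ (((m:ℝ) + 2) / ((m:ℝ) + 3)) ^ (1 - s) := by
        rw [show ((m:ℝ) + 3) = ((m:ℝ) + 1) + 2 by ring, show ((m:ℝ) + 2) = ((m:ℝ) + 1) + 1 by ring]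
        exact ratio_le hs0 hs1 ((m : ℝ) + 1) (by positivity)
      calc (∏ j ∈ Finset.range m, (((j : ℝ) + 1 + s) / ((j : ℝ) + 2))) * (((m : ℝ) + 1 + s) / ((m : ℝ) + 2))
          ≤ (2 / ((m : ℝ) + 2)) ^ (1 - s) * ((((m:ℝ) + 2) / ((m:ℝ) + 3)) ^ (1 - s)) :=
            mul_le_mul ih hstep (by positivity) (by positivity)
        _ = (2 / ((m : ℝ) + 3)) ^ (1 - s) := by
            rw [← Real.mul_rpow (by positivity) (by positivity)]
            congr 1
            field_simp
        _ = (2 / (((m + 1 : ℕ) : ℝ) + 2)) ^ (1 - s) := by push_cast; ring_nf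

lemma fact_eq_prod (m : ℕ) : (((m + 1).factorial : ℕ) : ℝ) = ∏ j ∈ Finset.range m, ((j : ℝ) + 2) := by
  induction m with
  | zero => simp
  | succ m ih =>
      rw [Finset.prod_range_succ, ← ih]
      push_cast [Nat.factorial_succ]
      ring

lemma pochR_shift_le {s : ℝ} (hs0 : 0 ≤ s) (hs1 : s ≤ 1) (m : ℕ) :
    pochR (s + 1) m ≤ (2 / ((m : ℝ) + 2)) ^ (1 - s) * ((m + 1).factorial : ℝ) := by
  have h : pochR (s + 1) m
      = (∏ j ∈ Finset.range m, (((j : ℝ) + 1 + s) / ((j : ℝ) + 2))) * ∏ j ∈ Finset.range m, ((j : ℝ) + 2) := by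
    rw [← Finset.prod_mul_distrib, pochR]
    refine Finset.prod_congr rfl fun k _ => ?_
    have : ((k : ℝ) + 2) ≠ 0 := by positivity
    field_simp
    ring
  rw [h, fact_eq_prod]
  exact mul_le_mul_of_nonneg_right (prod_ratio_le hs0 hs1 m)
    (Finset.prod_nonneg fun j _ => by positivity)

noncomputable def fT (a b c : ℝ) (m : ℕ) : ℝ :=
  Real.Gamma (c + 1) * pochR (c + 1) m * pochR a (m + 1) * pochR b (m + 1) /
    (((m + 1).factorial : ℝ)) ^ 3

lemma fT_nonneg {a b c : ℝ} (ha : 0 < a) (hb : 0 < b) (hc : 0 ≤ c) (m : ℕ) :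
    0 ≤ fT a b c m := by
  have hΓ : 0 < Real.Gamma (c + 1) := Real.Gamma_pos_of_pos (by linarith)
  have h1 := pochR_pos (show (0:ℝ) < c + 1 by linarith) m
  have h2 := pochR_pos ha (m + 1)
  have h3 := pochR_pos hb (m + 1)
  unfold fT
  positivity

lemma fT_le {a b c : ℝ} (ha0 : 0 < a) (ha1 : a ≤ 1) (hb0 : 0 < b) (hb1 : b ≤ 1)
    (hc0 : 0 ≤ c) (hc1 : c ≤ 1) (m : ℕ) :
    fT a b c m ≤ Real.Gamma (c + 1) * (a * b * (2 / ((m : ℝ) + 2)) ^ (3 - a - b - c)) := by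
  have hΓ : 0 < Real.Gamma (c + 1) := Real.Gamma_pos_of_pos (by linarith)
  have hF : (0:ℝ) < ((m + 1).factorial : ℝ) := by positivity
  have hx : (0:ℝ) < 2 / ((m : ℝ) + 2) := by positivity
  have B1 := pochR_shift_le hc0 hc1 m
  have B2 : pochR a (m + 1) ≤ a * ((2 / ((m : ℝ) + 2)) ^ (1 - a) * ((m + 1).factorial : ℝ)) := by
    rw [pochR_succ']
    exact mul_le_mul_of_nonneg_left (pochR_shift_le ha0.le ha1 m) ha0.le
  have B3 : pochR b (m + 1) ≤ b * ((2 / ((m : ℝ) + 2)) ^ (1 - b) * ((m + 1).factorial : ℝ)) := by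
    rw [pochR_succ']
    exact mul_le_mul_of_nonneg_left (pochR_shift_le hb0.le hb1 m) hb0.le
  have h1 := pochR_pos (show (0:ℝ) < c + 1 by linarith) m
  have h2 := pochR_pos ha0 (m + 1)
  have h3 := pochR_pos hb0 (m + 1)
  calc fT a b c m
      ≤ Real.Gamma (c + 1) * ((2 / ((m : ℝ) + 2)) ^ (1 - c) * ((m + 1).factorial : ℝ))
          * (a * ((2 / ((m : ℝ) + 2)) ^ (1 - a) * ((m + 1).factorial : ℝ)))
          * (b * ((2 / ((m : ℝ) + 2)) ^ (1 - b) * ((m + 1).factorial : ℝ)))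
          / (((m + 1).factorial : ℝ)) ^ 3 := by
        unfold fT
        gcongr
    _ = Real.Gamma (c + 1) * (a * b *
          ((2 / ((m : ℝ) + 2)) ^ (1 - c) * (2 / ((m : ℝ) + 2)) ^ (1 - a)
            * (2 / ((m : ℝ) + 2)) ^ (1 - b))) := by
        field_simp
    _ = Real.Gamma (c + 1) * (a * b * (2 / ((m : ℝ) + 2)) ^ (3 - a - b - c)) := by
        rw [← Real.rpow_add hx, ← Real.rpow_add hx,
          show (1:ℝ) - c + (1 - a) + (1 - b) = 3 - a - b - c by ring]

lemma sum_aux {q : ℝ} (hq : 1 < q) : Summable (fun m : ℕ => (2 / ((m : ℝ) + 2)) ^ q) := by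
  have h := (Real.summable_one_div_nat_rpow (p := q)).mpr hq
  have h2 : Summable (fun m : ℕ => 1 / (((m + 2 : ℕ) : ℝ)) ^ q) := (summable_nat_add_iff 2).mpr h
  have h3 := h2.mul_left ((2:ℝ) ^ q)
  refine h3.congr fun m => ?_
  push_cast
  rw [Real.div_rpow (by norm_num) (by positivity)]
  ring

/-- Generalized hypergeometric series `₃F₂(a₁,a₂,a₃;b₁,b₂;x)` (real). -/
noncomputable def hyp3F2 (a₁ a₂ a₃ b₁ b₂ x : ℝ) : ℝ :=
  ∑' n : ℕ, (pochR a₁ n * pochR a₂ n * pochR a₃ n) /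
    (pochR b₁ n * pochR b₂ n * (n.factorial : ℝ)) * x ^ n

/-- Generalized hypergeometric series `₄F₃(a₁,a₂,a₃,a₄;b₁,b₂,b₃;x)` (real). -/
noncomputable def hyp4F3 (a₁ a₂ a₃ a₄ b₁ b₂ b₃ x : ℝ) : ℝ :=
  ∑' n : ℕ, (pochR a₁ n * pochR a₂ n * pochR a₃ n * pochR a₄ n) /
    (pochR b₁ n * pochR b₂ n * pochR b₃ n * (n.factorial : ℝ)) * x ^ n

lemma contG : ContinuousAt (fun c : ℝ => Real.Gamma (c + 1)) 0 := by
  have hΓ1 : ContinuousAt Real.Gamma 1 :=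
    (Real.differentiableAt_Gamma (fun n => by
      have h0 : (0:ℝ) ≤ n := n.cast_nonneg
      intro h
      linarith)).continuousAt
  have hadd : ContinuousAt (fun c : ℝ => c + 1) (0:ℝ) := (continuous_add_right 1).continuousAt
  have h := ContinuousAt.comp (x := (0:ℝ)) (g := Real.Gamma) (f := fun c : ℝ => c + 1)
    (by norm_num; exact hΓ1) hadd
  simpa [Function.comp_def] using h

theorem stmt1 (a b : ℝ) (ha0 : 0 < a) (ha1 : a < 1) (hb0 : 0 < b) (hb1 : b < 1) :
    Tendsto (fun c : ℝ => Real.Gamma c * (hyp3F2 a b c 1 1 1 - 1))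
      (𝓝[>] (0 : ℝ))
      (𝓝 (a * b * hyp4F3 (1 + a) (1 + b) 1 1 2 2 2 1)) := by
  have hε0 : (0:ℝ) < min 1 ((2 - a - b) / 2) := lt_min one_pos (by linarith)
  set ε : ℝ := min 1 ((2 - a - b) / 2) with hεdef
  set p : ℝ := (4 - a - b) / 2 with hpdef
  have hp1 : 1 < p := by rw [hpdef]; linarith
  -- summable bound
  have hbsum : Summable (fun m : ℕ => 2 * (a * b * (2 / ((m : ℝ) + 2)) ^ p)) :=
    (((sum_aux hp1).mul_left (a * b)).mul_left 2)
  -- pointwise limits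
  have hcont : ∀ m : ℕ, ContinuousAt (fun c : ℝ => fT a b c m) 0 := by
    intro m
    have h1 : ContinuousAt (fun c : ℝ => Real.Gamma (c + 1)) 0 := contG
    have h2 : Continuous (fun c : ℝ => pochR (c + 1) m) := by
      unfold pochR
      exact continuous_finset_prod _ fun k _ => by continuity
    exact (((h1.mul h2.continuousAt).mul continuousAt_const).mul continuousAt_const).div_const _
  have hlim : ∀ m : ℕ, Tendsto (fun c : ℝ => fT a b c m) (𝓝[>] (0:ℝ)) (𝓝 (fT a b 0 m)) :=
    fun m => ((hcont m).tendsto).mono_left nhdsWithin_le_nhds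
  -- Gamma(c+1) tends to 1
  have hG1 : Tendsto (fun c : ℝ => Real.Gamma (c + 1)) (𝓝[>] (0:ℝ)) (𝓝 1) := by
    have := contG.tendsto.mono_left (nhdsWithin_le_nhds (s := Set.Ioi (0:ℝ)))
    simpa [Real.Gamma_one] using this
  have hev1 : ∀ᶠ c in 𝓝[>] (0:ℝ), Real.Gamma (c + 1) < 2 :=
    hG1.eventually_lt_const (by norm_num)
  have hev2 : ∀ᶠ c in 𝓝[>] (0:ℝ), c ∈ Set.Ioo 0 ε :=
    Ioo_mem_nhdsGT_of_mem ⟨le_rfl, hε0⟩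
  -- eventual bound
  have hbd : ∀ᶠ c in 𝓝[>] (0:ℝ), ∀ m : ℕ,
      ‖fT a b c m‖ ≤ 2 * (a * b * (2 / ((m : ℝ) + 2)) ^ p) := by
    filter_upwards [hev1, hev2] with c hΓ2 hcε
    intro m
    have hc0 : 0 < c := hcε.1
    have hc1 : c ≤ 1 := le_of_lt (lt_of_lt_of_le hcε.2 (min_le_left _ _))
    have hc2 : c < (2 - a - b) / 2 := lt_of_lt_of_le hcε.2 (min_le_right _ _)
    have hx0 : (0:ℝ) < 2 / ((m : ℝ) + 2) := by positivity
    have hx1 : 2 / ((m : ℝ) + 2) ≤ 1 := by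
      rw [div_le_one (by positivity)]
      linarith [Nat.cast_nonneg (α := ℝ) m]
    rw [Real.norm_eq_abs, abs_of_nonneg (fT_nonneg ha0 hb0 hc0.le m)]
    calc fT a b c m
        ≤ Real.Gamma (c + 1) * (a * b * (2 / ((m : ℝ) + 2)) ^ (3 - a - b - c)) :=
          fT_le ha0 ha1.le hb0 hb1.le hc0.le hc1 m
      _ ≤ 2 * (a * b * (2 / ((m : ℝ) + 2)) ^ (3 - a - b - c)) := by
          apply mul_le_mul_of_nonneg_right hΓ2.le
          positivity
      _ ≤ 2 * (a * b * (2 / ((m : ℝ) + 2)) ^ p) := by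
          have := Real.rpow_le_rpow_of_exponent_ge hx0 hx1 (show p ≤ 3 - a - b - c by
            rw [hpdef]; linarith)
          have hab : (0:ℝ) ≤ a * b := by positivity
          nlinarith [Real.rpow_nonneg hx0.le p]
  have key := tendsto_tsum_of_dominated_convergence hbsum hlim hbd
  -- identify the limit value
  have hg : ∑' m : ℕ, fT a b 0 m = a * b * hyp4F3 (1 + a) (1 + b) 1 1 2 2 2 1 := by
    unfold hyp4F3
    rw [← tsum_mul_left]
    refine tsum_congr fun m => ?_
    have hF1 : ((m + 1).factorial : ℝ) ≠ 0 := by positivity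
    have hF0 : ((m).factorial : ℝ) ≠ 0 := by positivity
    unfold fT
    rw [show (0:ℝ) + 1 = 1 by ring, Real.Gamma_one, pochR_succ' a, pochR_succ' b,
      pochR_one, pochR_two, one_pow,
      show (1:ℝ) + a = a + 1 from add_comm 1 a, show (1:ℝ) + b = b + 1 from add_comm 1 b]
    field_simp
  rw [← hg]
  refine key.congr' ?_
  filter_upwards [hev2] with c hcε
  obtain ⟨hc0, hcε2⟩ := hcε
  have hc2 : c < (2 - a - b) / 2 := lt_of_lt_of_le hcε2 (min_le_right _ _)
  have hc1 : c ≤ 1 := le_of_lt (lt_of_lt_of_le hcε2 (min_le_left _ _))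
  have hΓc : (0:ℝ) < Real.Gamma c := Real.Gamma_pos_of_pos hc0
  -- summability of fT a b c
  have hsummf : Summable (fT a b c) := by
    refine Summable.of_nonneg_of_le (fun m => fT_nonneg ha0 hb0 hc0.le m)
      (fun m => fT_le ha0 ha1.le hb0 hb1.le hc0.le hc1 m) ?_
    exact ((sum_aux (q := 3 - a - b - c) (by linarith)).mul_left (a * b)).mul_left _
  set t : ℕ → ℝ := fun n => (pochR a n * pochR b n * pochR c n) /
    (pochR 1 n * pochR 1 n * (n.factorial : ℝ)) * (1:ℝ) ^ n with htdef
  have hft : ∀ m : ℕ, fT a b c m = Real.Gamma c * t (m + 1) := by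
    intro m
    simp only [htdef, one_pow, pochR_one]
    rw [pochR_succ' c]
    unfold fT
    rw [Real.Gamma_add_one hc0.ne']
    have hF1 : ((m + 1).factorial : ℝ) ≠ 0 := by positivity
    field_simp
  have hst : Summable t := by
    have h1 : Summable (fun m : ℕ => t (m + 1)) := by
      refine ((hsummf.mul_left (Real.Gamma c)⁻¹).congr fun m => ?_)
      rw [hft m]
      field_simp
    exact (summable_nat_add_iff 1).mp h1
  have ht0 : t 0 = 1 := by simp [htdef, pochR]
  show ∑' m : ℕ, fT a b c m = Real.Gamma c * (hyp3F2 a b c 1 1 1 - 1)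
  have hhyp : hyp3F2 a b c 1 1 1 = ∑' n, t n := rfl
  rw [hhyp, Summable.tsum_eq_zero_add hst, ht0, add_sub_cancel_left, ← tsum_mul_left]
  exact tsum_congr hft
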